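/- arXiv:1409.0483 — 4 statements merged into one kernel-verified Lean document; each statement's English description precedes it below -/
import Mathlib

section
/- Let n, α, q be positive integers with α + q ≤ n, and let m be an integer with F_n ≤ m < F_{n+1}. Suppose there exists k with α + 2 ≤ k ≤ α + q such that a_{k−1}(m) = a_k(m) = 0. Then for every integer h with 0 ≤ h < F_α and every index j with j > α + q, the Zeckendorf digits satisfy a_j(m + h) = a_j(m). In particular, the quantity #{j : j > α + q and a_j(x) = 1} takes the same value for every integer x with m ≤ x < m + F_α. -/
open Filter MeasureTheory

/-- Fibonacci numbers normalized so that `F 1 = 1`, `F 2 = 2`. -/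
def F (n : ℕ) : ℕ := Nat.fib (n + 1)

/-- `a` is the (unique) system of Zeckendorf digits: `a m j` is the `j`-th digit of `m`,
digits are `0` or `1`, indexed from `1`, no two consecutive digits are `1`,
digits vanish above `m`, and the digits decompose `m`. -/
def IsZeckendorf (a : ℕ → ℕ → ℕ) : Prop :=
  ∀ m : ℕ,
    a m 0 = 0 ∧
    (∀ j, a m j ≤ 1) ∧
    (∀ j, ¬(a m j = 1 ∧ a m (j + 1) = 1)) ∧
    (∀ j, m < j → a m j = 0) ∧
    m = ∑ j ∈ Finset.Icc 1 m, a m j * F j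

/-- Number of summands in the Zeckendorf decomposition of `m`. -/
def s (a : ℕ → ℕ → ℕ) (m : ℕ) : ℕ := ∑ j ∈ Finset.Icc 1 m, a m j

lemma F_mono : Monotone F := fun i j h => Nat.fib_mono (by omega)

lemma F_add (N : ℕ) : F (N + 2) = F (N + 1) + F N := by
  simp [F, Nat.fib_add_two]; ring

lemma le_F : ∀ j, j ≤ F j := by
  intro j
  induction j with
  | zero => simp [F]
  | succ j ih =>
    rcases Nat.eq_zero_or_pos j with rfl | hj
    · simp [F]
    · have h1 : Nat.fib (j + 1) < Nat.fib (j + 1 + 1) := Nat.fib_lt_fib_succ (by omega)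
      simp only [F] at ih ⊢
      omega

/-- Bound: a Zeckendorf-digits sum up to index `N` is less than `F (N+1)`. -/
lemma sum_lt (b : ℕ → ℕ) (hb1 : ∀ j, b j ≤ 1) (hb2 : ∀ j, ¬(b j = 1 ∧ b (j + 1) = 1)) :
    ∀ N, ∑ j ∈ Finset.Icc 1 N, b j * F j < F (N + 1) := by
  intro N
  induction N using Nat.strong_induction_on with
  | _ N ih =>
    match N with
    | 0 => simp [F]
    | 1 =>
      have := hb1 1
      simp only [Finset.Icc_self, Finset.sum_singleton]
      have hF1 : F 1 = 1 := by decide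
      have hF2 : F 2 = 2 := by decide
      nlinarith
    | (N + 2) =>
      have e : ∑ j ∈ Finset.Icc 1 (N + 2), b j * F j =
          (∑ j ∈ Finset.Icc 1 N, b j * F j) + b (N + 1) * F (N + 1) + b (N + 2) * F (N + 2) := by
        rw [Finset.sum_Icc_succ_top (by omega : 1 ≤ N + 2),
          Finset.sum_Icc_succ_top (by omega : 1 ≤ N + 1)]
      have e' : ∑ j ∈ Finset.Icc 1 (N + 1), b j * F j =
          (∑ j ∈ Finset.Icc 1 N, b j * F j) + b (N + 1) * F (N + 1) := by
        rw [Finset.sum_Icc_succ_top (by omega : 1 ≤ N + 1)]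
      have h3 : F (N + 3) = F (N + 2) + F (N + 1) := F_add (N + 1)
      show ∑ j ∈ Finset.Icc 1 (N + 2), b j * F j < F (N + 3)
      rw [e]
      by_cases hN : b (N + 2) = 1
      · have h1 : b (N + 1) = 0 := by
          have hbb : ¬(b (N + 1) = 1 ∧ b (N + 2) = 1) := hb2 (N + 1)
          have := hb1 (N + 1); omega
        have h2 := ih N (by omega)
        rw [hN, h1]
        omega
      · have hN0 : b (N + 2) = 0 := by have := hb1 (N + 2); omega
        have h2 : ∑ j ∈ Finset.Icc 1 (N + 1), b j * F j < F (N + 2) := ih (N + 1) (by omega)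
        rw [e'] at h2
        have h4 : F (N + 2) ≤ F (N + 3) := F_mono (by omega)
        rw [hN0]
        omega

/-- Uniqueness of Zeckendorf digit strings. -/
lemma uniq (b c : ℕ → ℕ) (hb1 : ∀ j, b j ≤ 1) (hb2 : ∀ j, ¬(b j = 1 ∧ b (j + 1) = 1))
    (hc1 : ∀ j, c j ≤ 1) (hc2 : ∀ j, ¬(c j = 1 ∧ c (j + 1) = 1)) :
    ∀ N, (∑ j ∈ Finset.Icc 1 N, b j * F j = ∑ j ∈ Finset.Icc 1 N, c j * F j) →
      ∀ j, 1 ≤ j → j ≤ N → b j = c j := by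
  have key : ∀ b' c' : ℕ → ℕ, ∀ N : ℕ, (∀ j, c' j ≤ 1) → (∀ j, ¬(c' j = 1 ∧ c' (j + 1) = 1)) →
      b' (N + 1) = 1 → c' (N + 1) = 0 →
      (∑ j ∈ Finset.Icc 1 (N + 1), b' j * F j = ∑ j ∈ Finset.Icc 1 (N + 1), c' j * F j) →
      False := by
    intro b' c' N hc1' hc2' hbt hct hsum'
    have h1 : F (N + 1) ≤ ∑ j ∈ Finset.Icc 1 (N + 1), b' j * F j := by
      rw [Finset.sum_Icc_succ_top (by omega), hbt]; omega
    have h2 : ∑ j ∈ Finset.Icc 1 (N + 1), c' j * F j < F (N + 1) := by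
      rw [Finset.sum_Icc_succ_top (by omega), hct]
      simpa using sum_lt c' hc1' hc2' N
    omega
  intro N
  induction N with
  | zero => intro _ j h1 h2; omega
  | succ N ih =>
    intro hsum
    have htop : b (N + 1) = c (N + 1) := by
      by_contra hne
      have hbb := hb1 (N + 1); have hcc := hc1 (N + 1)
      rcases Nat.lt_or_ge (b (N + 1)) (c (N + 1)) with hlt | hge
      · exact key c b N hb1 hb2 (by omega) (by omega) hsum.symm
      · exact key b c N hc1 hc2 (by omega) (by omega) hsum
    have hsum' : ∑ j ∈ Finset.Icc 1 N, b j * F j = ∑ j ∈ Finset.Icc 1 N, c j * F j := by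
      rw [Finset.sum_Icc_succ_top (by omega), Finset.sum_Icc_succ_top (by omega), htop] at hsum
      omega
    intro j h1 h2
    rcases Nat.lt_or_ge j (N + 1) with h | h
    · exact ih hsum' j h1 (by omega)
    · have : j = N + 1 := by omega
      rw [this]; exact htop

/-- A digit being 1 forces the value to be at least the corresponding Fibonacci number. -/
lemma digit_le (a : ℕ → ℕ → ℕ) (ha : IsZeckendorf a) (v j : ℕ) (hj : a v j = 1) : F j ≤ v := by
  obtain ⟨h0, h1, h2, h3, h4⟩ := ha v
  by_cases hjv : v < j
  · rw [h3 j hjv] at hj; omega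
  · have hj1 : 1 ≤ j := by
      by_contra h
      have : j = 0 := by omega
      rw [this, h0] at hj; omega
    calc F j = a v j * F j := by rw [hj, one_mul]
      _ ≤ ∑ i ∈ Finset.Icc 1 v, a v i * F i :=
        Finset.single_le_sum (f := fun i => a v i * F i) (fun i _ => Nat.zero_le _)
          (Finset.mem_Icc.mpr ⟨hj1, by omega⟩)
      _ = v := h4.symm

/-- Extending a sum of digits beyond the support does not change it. -/
lemma sum_zero_ext (f : ℕ → ℕ) (t T : ℕ) (hT : t ≤ T) (h : ∀ j, t < j → f j = 0) :
    ∑ j ∈ Finset.Icc 1 T, f j = ∑ j ∈ Finset.Icc 1 t, f j := by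
  refine (Finset.sum_subset (Finset.Icc_subset_Icc le_rfl hT) ?_).symm
  intro j hj hj'
  simp only [Finset.mem_Icc] at hj hj'
  exact h j (by omega)

/-- Truncated digit sum still equals the value, provided digits vanish above the cutoff. -/
lemma sum_trunc (a : ℕ → ℕ → ℕ) (ha : IsZeckendorf a) (v t : ℕ)
    (ht : ∀ j, t < j → a v j = 0) :
    ∑ j ∈ Finset.Icc 1 t, a v j * F j = v := by
  obtain ⟨h0, h1, h2, h3, h4⟩ := ha v
  have e1 : ∑ j ∈ Finset.Icc 1 (max t v), a v j * F j = ∑ j ∈ Finset.Icc 1 t, a v j * F j :=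
    sum_zero_ext _ t (max t v) (le_max_left _ _) (fun j hj => by rw [ht j hj, zero_mul])
  have e2 : ∑ j ∈ Finset.Icc 1 (max t v), a v j * F j = ∑ j ∈ Finset.Icc 1 v, a v j * F j :=
    sum_zero_ext _ v (max t v) (le_max_right _ _) (fun j hj => by rw [h3 j hj, zero_mul])
  rw [← e1, e2, ← h4]

/-- if `C₂(m)` has two consecutive zeros then the top digits are
constant on `[m, m + F α)`. -/
theorem top_digits_constant
    (a : ℕ → ℕ → ℕ) (ha : IsZeckendorf a)
    (n α q : ℕ) (hn : 0 < n) (hα : 0 < α) (hq : 0 < q) (hαq : α + q ≤ n)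
    (m : ℕ) (hm1 : F n ≤ m) (hm2 : m < F (n + 1))
    (k : ℕ) (hk1 : α + 2 ≤ k) (hk2 : k ≤ α + q)
    (hk3 : a m (k - 1) = 0) (hk4 : a m k = 0) :
    (∀ h : ℕ, h < F α → ∀ j, α + q < j → a (m + h) j = a m j) ∧
    (∀ x : ℕ, m ≤ x → x < m + F α →
      ((Finset.Ioc (α + q) x).filter (fun j => a x j = 1)).card =
        ((Finset.Ioc (α + q) m).filter (fun j => a m j = 1)).card) := by
  obtain ⟨h0m, h1m, h2m, h3m, h4m⟩ := ha m
  have hk3' : 3 ≤ k := by omega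
  set L := ∑ j ∈ Finset.Icc 1 (k - 2), a m j * F j with hL
  have hLlt : L < F (k - 1) := by
    have h := sum_lt (a m) h1m h2m (k - 2)
    have : k - 2 + 1 = k - 1 := by omega
    rwa [this] at h
  have hmk : k ≤ m := le_trans (le_trans (le_F k) (F_mono (by omega))) hm1
  -- split m at position k - 1 (digits k-1 and k of m vanish)
  have hIcc : ∀ t : ℕ, Finset.Icc 1 t = Finset.Ioc 0 t := by
    intro t; exact Finset.Icc_add_one_left_eq_Ioc 0 t
  have hsplit : m = L + ∑ j ∈ Finset.Icc k m, a m j * F j := by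
    have h1 : ∑ j ∈ Finset.Ioc 0 (k - 1), a m j * F j +
        ∑ j ∈ Finset.Ioc (k - 1) m, a m j * F j = ∑ j ∈ Finset.Ioc 0 m, a m j * F j :=
      Finset.sum_Ioc_consecutive _ (by omega) (by omega)
    have h2 : ∑ j ∈ Finset.Icc 1 (k - 1), a m j * F j = L := by
      have : k - 1 = (k - 2) + 1 := by omega
      rw [this, Finset.sum_Icc_succ_top (by omega)]
      have : (k - 2) + 1 = k - 1 := by omega
      rw [this, hk3]; simp [hL]
    have h3 : Finset.Ioc (k - 1) m = Finset.Icc k m := by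
      rw [← Finset.Icc_add_one_left_eq_Ioc]
      congr 1
      omega
    rw [hIcc] at h2
    rw [h2, h3] at h1
    rw [h1, ← hIcc, ← h4m]
  -- main digit-stability claim
  have main : ∀ h : ℕ, h < F α → ∀ j, k ≤ j → a (m + h) j = a m j := by
    intro h hh j hj
    set v := L + h with hv
    have hvlt : v < F k := by
      have h1 : F α ≤ F (k - 2) := F_mono (by omega)
      have h2 : F (k - 1) + F (k - 2) = F k := by
        have e1 : k - 2 + 2 = k := by omega
        have e2 : k - 2 + 1 = k - 1 := by omega
        have := F_add (k - 2)
        rw [e1, e2] at this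
        omega
      omega
    obtain ⟨h0v, h1v, h2v, h3v, h4v⟩ := ha v
    have hvdig : ∀ i, k - 1 < i → a v i = 0 := by
      intro i hi
      by_contra hne
      have h1 : a v i = 1 := by have := h1v i; omega
      have h2 := digit_le a ha v i h1
      have h3 : F k ≤ F i := F_mono (by omega)
      omega
    have hvsum : ∑ j ∈ Finset.Icc 1 (k - 1), a v j * F j = v := sum_trunc a ha v (k - 1) hvdig
    set c : ℕ → ℕ := fun i => if i ≤ k - 1 then a v i else a m i with hc
    obtain ⟨h0x, h1x, h2x, h3x, h4x⟩ := ha (m + h)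
    -- sum of c over Icc 1 (m+h) equals m + h
    have hcsum : ∑ i ∈ Finset.Icc 1 (m + h), c i * F i = m + h := by
      have h1 : ∑ i ∈ Finset.Ioc 0 (k - 1), c i * F i +
          ∑ i ∈ Finset.Ioc (k - 1) (m + h), c i * F i = ∑ i ∈ Finset.Ioc 0 (m + h), c i * F i :=
        Finset.sum_Ioc_consecutive _ (by omega) (by omega)
      have h2 : ∑ i ∈ Finset.Ioc 0 (k - 1), c i * F i = v := by
        rw [← hIcc, ← hvsum]
        apply Finset.sum_congr rfl
        intro i hi
        simp only [Finset.mem_Icc] at hi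
        simp [hc, hi.2]
      have h3 : ∑ i ∈ Finset.Ioc (k - 1) (m + h), c i * F i =
          ∑ j ∈ Finset.Icc k m, a m j * F j := by
        have e1 : Finset.Ioc (k - 1) (m + h) = Finset.Icc k (m + h) := by
          rw [← Finset.Icc_add_one_left_eq_Ioc]; congr 1; omega
        rw [e1]
        rw [show ∑ i ∈ Finset.Icc k (m + h), c i * F i =
            ∑ i ∈ Finset.Icc k (m + h), a m i * F i from
          Finset.sum_congr rfl (fun i hi => by
            simp only [Finset.mem_Icc] at hi
            simp [hc, show ¬ i ≤ k - 1 by omega])]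
        refine (Finset.sum_subset (Finset.Icc_subset_Icc le_rfl (by omega)) ?_).symm
        intro i hi hi'
        simp only [Finset.mem_Icc] at hi hi'
        rw [h3m i (by omega), zero_mul]
      rw [h2, h3] at h1
      rw [hIcc, ← h1, hv]
      omega
    have hc1 : ∀ i, c i ≤ 1 := by
      intro i; simp only [hc]; split <;> [exact h1v i; exact h1m i]
    have hc2 : ∀ i, ¬(c i = 1 ∧ c (i + 1) = 1) := by
      intro i
      simp only [hc]
      rcases Nat.lt_trichotomy (i + 1) k with h' | h' | h'
      · simp only [show i ≤ k - 1 by omega, show i + 1 ≤ k - 1 ∨ ¬ (i + 1 ≤ k - 1) from by omega]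
        by_cases hcase : i + 1 ≤ k - 1
        · simp only [hcase, if_true]
          exact h2v i
        · -- i + 1 = k - 1 + 1? no, i + 1 < k and ¬(i+1 ≤ k-1) impossible since k ≥ 1
          omega
      · -- i + 1 = k : c i = a v i, c (i+1) = a m k = 0
        simp only [show i ≤ k - 1 by omega, if_true, show ¬ (i + 1 ≤ k - 1) by omega, if_false]
        rw [show i + 1 = k from h', hk4]
        omega
      · simp only [show ¬ (i ≤ k - 1) by omega, if_false, show ¬ (i + 1 ≤ k - 1) by omega]
        exact h2m i
    have hkey := uniq c (a (m + h)) hc1 hc2 h1x h2x (m + h) (by rw [hcsum, ← h4x])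
    rcases le_or_gt j (m + h) with hjm | hjm
    · have := hkey j (by omega) hjm
      rw [← this]
      simp [hc, show ¬ j ≤ k - 1 by omega]
    · rw [h3x j hjm, h3m j (by omega)]
  constructor
  · intro h hh j hj
    exact main h hh j (by omega)
  · intro x hx1 hx2
    obtain ⟨h, rfl⟩ := Nat.exists_eq_add_of_le hx1
    have hh : h < F α := by omega
    congr 1
    apply Finset.ext
    intro j
    simp only [Finset.mem_filter, Finset.mem_Ioc]
    constructor
    · rintro ⟨⟨hj1, hj2⟩, hj3⟩
      have heq : a (m + h) j = a m j := main h hh j (by omega)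
      refine ⟨⟨hj1, ?_⟩, by omega⟩
      by_contra hc
      have := h3m j (by omega)
      omega
    · rintro ⟨⟨hj1, hj2⟩, hj3⟩
      have heq : a (m + h) j = a m j := main h hh j (by omega)
      exact ⟨⟨hj1, by omega⟩, by omega⟩
end

section
/- Let n, α, q be positive integers with α + q ≤ n, and let m be an integer with F_n ≤ m < F_{n+1}. Suppose there exists k with α + 2 ≤ k ≤ α + q such that a_{k−1}(m) = a_k(m) = 0, and set s₃(m) := #{j : j > α + q and a_j(m) = 1}. Then there exists a bijection t from the set of integers {x : m ≤ x < m + F_α} onto the set of integers {y : 0 ≤ y < F_α} such that for every x in the domain, 0 ≤ s(x) − s₃(m) − s(t(x)) < q. -/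
open Filter MeasureTheory

lemma F_pos (n : ℕ) : 1 ≤ F n := Nat.fib_pos.mpr (Nat.succ_pos n)
lemma F_add_two (n : ℕ) : F (n + 2) = F (n + 1) + F n := by
  show Nat.fib (n + 3) = Nat.fib (n + 2) + Nat.fib (n + 1)
  rw [Nat.fib_add_two]; ring
lemma F_zero : F 0 = 1 := rfl
lemma F_one : F 1 = 1 := rfl
lemma F_two : F 2 = 2 := rfl
def ZGood (S : Finset ℕ) : Prop := (∀ i ∈ S, 1 ≤ i) ∧ (∀ i ∈ S, i + 1 ∉ S)
def zval (S : Finset ℕ) : ℕ := ∑ j ∈ S, F j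
lemma ZGood.subset {S T : Finset ℕ} (hT : ZGood T) (h : S ⊆ T) : ZGood S :=
  ⟨fun i hi => hT.1 i (h hi), fun i hi hc => hT.2 i (h hi) (h hc)⟩
lemma F_le_zval {S : Finset ℕ} {j : ℕ} (hj : j ∈ S) : F j ≤ zval S :=
  Finset.single_le_sum (fun i _ => Nat.zero_le _) hj

lemma zval_lt : ∀ (t : ℕ) {S : Finset ℕ}, ZGood S → (∀ i ∈ S, i ≤ t) → zval S < F (t + 1) := by
  intro t
  induction t using Nat.strong_induction_on with
  | _ t IH =>
    intro S hS ht
    match t, ht with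
    | 0, ht =>
      have : S = ∅ := by
        apply Finset.eq_empty_of_forall_notMem
        intro i hi; have := hS.1 i hi; have := ht i hi; omega
      simp [this, zval, F_one]
    | (u+1), ht =>
      by_cases hts : u + 1 ∈ S
      · have hS' : ZGood (S.erase (u+1)) := hS.subset (Finset.erase_subset _ _)
        have hv : zval S = F (u+1) + zval (S.erase (u+1)) := by
          rw [zval, ← Finset.add_sum_erase _ _ hts]; rfl
        have hle : ∀ i ∈ S.erase (u+1), i + 2 ≤ u + 1 := by
          intro i hi
          have h1 := Finset.mem_of_mem_erase hi
          have h2 : i ≠ u + 1 := Finset.ne_of_mem_erase hi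
          have h3 : i ≠ u := by
            intro h
            exact hS.2 i h1 (by rw [h]; exact hts)
          have := ht i h1
          omega
        match u with
        | 0 =>
          have he : S.erase (0+1) = ∅ := by
            apply Finset.eq_empty_of_forall_notMem
            intro i hi
            have := hle i hi; omega
          rw [hv, he]
          simp only [zval, Finset.sum_empty]
          decide
        | (w+1) =>
          have h1 : zval (S.erase (w+1+1)) < F (w+1) := IH w (by omega) hS' (fun i hi => by have := hle i hi; omega)
          have h2 := F_add_two (w+1)
          have h3 : F (w + 1 + 2) = F (w + 1 + 1 + 1) := rfl
          omega
      · have h1 : zval S < F (u+1) := IH u (by omega) hS (fun i hi => by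
          have := ht i hi
          rcases Nat.lt_or_ge i (u+1) with h | h
          · omega
          · exact absurd (by omega : i = u + 1) (fun e => hts (e ▸ hi)))
        have : F (u+1) ≤ F (u+1+1) := F_mono (by omega)
        omega

lemma zval_inj : ∀ n (S T : Finset ℕ), ZGood S → ZGood T → zval S = n → zval T = n → S = T := by
  intro n
  induction n using Nat.strong_induction_on with
  | _ n IH =>
    intro S T hS hT hSn hTn
    rcases Finset.eq_empty_or_nonempty S with rfl | hSne
    · simp only [zval, Finset.sum_empty] at hSn
      rcases Finset.eq_empty_or_nonempty T with rfl | hTne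
      · rfl
      · obtain ⟨j, hj⟩ := hTne
        have := F_le_zval hj
        have := F_pos j
        omega
    · rcases Finset.eq_empty_or_nonempty T with rfl | hTne
      · obtain ⟨j, hj⟩ := hSne
        have := F_le_zval hj
        have := F_pos j
        simp only [zval, Finset.sum_empty] at hTn
        omega
      · obtain ⟨M, hMS, hMmax⟩ : ∃ M, M ∈ S ∧ ∀ i ∈ S, i ≤ M :=
          ⟨S.max' hSne, S.max'_mem hSne, fun i hi => S.le_max' i hi⟩
        obtain ⟨M', hM'T, hM'max⟩ : ∃ M', M' ∈ T ∧ ∀ i ∈ T, i ≤ M' :=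
          ⟨T.max' hTne, T.max'_mem hTne, fun i hi => T.le_max' i hi⟩
        have h1 : F M ≤ n := hSn ▸ F_le_zval hMS
        have h2 : F M' ≤ n := hTn ▸ F_le_zval hM'T
        have h3 : n < F (M + 1) := hSn ▸ zval_lt M hS hMmax
        have h4 : n < F (M' + 1) := hTn ▸ zval_lt M' hT hM'max
        have hMM : M = M' := by
          by_contra h
          rcases Nat.lt_or_ge M M' with hlt | hge
          · have := F_mono (by omega : M + 1 ≤ M') ; omega
          · have := F_mono (by omega : M' + 1 ≤ M) ; omega
        subst hMM
        have hvS : zval S = F M + zval (S.erase M) := by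
          rw [zval, ← Finset.add_sum_erase _ _ hMS]; rfl
        have hvT : zval T = F M + zval (T.erase M) := by
          rw [zval, ← Finset.add_sum_erase _ _ hM'T]; rfl
        have hFM := F_pos M
        have heq : S.erase M = T.erase M := by
          apply IH (zval (S.erase M)) (by omega) _ _ (hS.subset (Finset.erase_subset _ _))
            (hT.subset (Finset.erase_subset _ _)) rfl
          omega
        ext x
        by_cases hx : x = M
        · subst hx; simp [hMS, hM'T]
        · constructor
          · intro h; exact Finset.mem_of_mem_erase (heq ▸ Finset.mem_erase_of_ne_of_mem hx h)
          · intro h; exact Finset.mem_of_mem_erase (heq ▸ Finset.mem_erase_of_ne_of_mem hx h)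

section Digits

variable {a : ℕ → ℕ → ℕ} (ha : IsZeckendorf a)

/-- The digit set of `x`. -/
def Zset (a : ℕ → ℕ → ℕ) (x : ℕ) : Finset ℕ := (Finset.Icc 1 x).filter (fun j => a x j = 1)

include ha

lemma ZGood_Zset (x : ℕ) : ZGood (Zset a x) := by
  constructor
  · intro i hi
    exact (Finset.mem_Icc.mp (Finset.mem_filter.mp hi).1).1
  · intro i hi hc
    exact (ha x).2.2.1 i ⟨(Finset.mem_filter.mp hi).2, (Finset.mem_filter.mp hc).2⟩

lemma zval_Zset (x : ℕ) : zval (Zset a x) = x := by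
  have h := (ha x).2.2.2.2
  have key : zval (Zset a x) = ∑ j ∈ Finset.Icc 1 x, a x j * F j := by
    rw [zval, Zset, Finset.sum_filter]
    apply Finset.sum_congr rfl
    intro j hj
    have h1 := (ha x).2.1 j
    interval_cases (a x j) <;> simp
  omega

lemma s_eq_card (x : ℕ) : s a x = (Zset a x).card := by
  rw [s, Zset, Finset.card_filter]
  apply Finset.sum_congr rfl
  intro j hj
  have h1 := (ha x).2.1 j
  interval_cases (a x j) <;> simp

lemma s_of_good {T : Finset ℕ} (hT : ZGood T) : s a (zval T) = T.card := by
  have h : Zset a (zval T) = T :=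
    zval_inj (zval T) _ _ (ZGood_Zset ha _) hT (zval_Zset ha _) rfl
  rw [s_eq_card ha, h]

lemma s_zero : s a 0 = 0 := by
  have : Zset a 0 = ∅ := by
    apply Finset.eq_empty_of_forall_notMem
    intro i hi
    have := Finset.mem_Icc.mp (Finset.mem_filter.mp hi).1
    omega
  rw [s_eq_card ha, this, Finset.card_empty]

lemma s_add {S₁ : Finset ℕ} (h1 : ZGood S₁) {t : ℕ} (hp : ∀ i ∈ S₁, t + 1 ≤ i) {w : ℕ}
    (hw : w < F t) : s a (zval S₁ + w) = S₁.card + s a w := by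
  have hg2 : ZGood (Zset a w) := ZGood_Zset ha w
  have hv2 : zval (Zset a w) = w := zval_Zset ha w
  have hlt : ∀ i ∈ Zset a w, i < t := by
    intro i hi
    have h2 : F i ≤ w := hv2 ▸ F_le_zval hi
    by_contra h
    push_neg at h
    have := F_mono h
    omega
  have hdisj : Disjoint S₁ (Zset a w) := by
    rw [Finset.disjoint_left]
    intro i hi hc
    have := hp i hi; have := hlt i hc; omega
  have hgood : ZGood (S₁ ∪ Zset a w) := by
    constructor
    · intro i hi
      rcases Finset.mem_union.mp hi with h | h
      · have := hp i h; omega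
      · exact hg2.1 i h
    · intro i hi hc
      rcases Finset.mem_union.mp hi with h | h <;> rcases Finset.mem_union.mp hc with h' | h'
      · exact h1.2 i h h'
      · have := hp i h; have := hlt _ h'; omega
      · have := hlt i h; have := hp _ h'; omega
      · exact hg2.2 i h h'
  have hval : zval (S₁ ∪ Zset a w) = zval S₁ + w := by
    show ∑ x ∈ S₁ ∪ Zset a w, F x = zval S₁ + w
    rw [Finset.sum_union hdisj, show (∑ x ∈ Zset a w, F x) = w from hv2]
    rfl
  calc s a (zval S₁ + w) = (S₁ ∪ Zset a w).card := by rw [← hval, s_of_good ha hgood]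
    _ = S₁.card + (Zset a w).card := Finset.card_union_of_disjoint hdisj
    _ = S₁.card + s a w := by rw [s_eq_card ha]

lemma s_single {j : ℕ} (hj : 1 ≤ j) {w : ℕ} (hw : F j + w < F (j + 1)) :
    s a (F j + w) = 1 + s a w := by
  match j, hj with
  | 1, _ =>
    have hw0 : w = 0 := by
      have h1 : F 1 = 1 := rfl
      have h2 : F (1+1) = 2 := rfl
      omega
    subst hw0
    have h1 : s a (F 1 + 0) = s a (zval {1}) := by norm_num [zval, F_one]
    rw [h1, s_of_good ha ⟨by simp, by simp⟩, s_zero ha, Finset.card_singleton]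
  | (u+2), _ =>
    have hF := F_add_two (u+1)
    have hzv : zval {u+2} = F (u+2) := by simp [zval]
    have e1 : F (u+2+1) = F (u+1+2) := rfl
    have e2 : F (u+2) = F (u+1+1) := rfl
    have := s_add ha (S₁ := {u+2}) ⟨by simp, by simp⟩ (t := u+1) (by simp) (w := w) (by omega)
    rw [hzv] at this
    rw [this, Finset.card_singleton]

lemma s_F {j : ℕ} (hj : 1 ≤ j) : s a (F j) = 1 := by
  have : zval {j} = F j := by simp [zval]
  rw [← this, s_of_good ha ⟨by simpa using hj, by simp⟩, Finset.card_singleton]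

end Digits

section Main

variable {a : ℕ → ℕ → ℕ} (ha : IsZeckendorf a)

include ha

lemma splus : ∀ γ v, v < F (γ + 1) → s a v ≤ s a (F γ + v) ∧ s a (F γ + v) ≤ s a v + 1 := by
  intro γ
  induction γ using Nat.strong_induction_on with
  | _ γ IH =>
    match γ with
    | 0 =>
      intro v hv
      have hv0 : v = 0 := by have : F (0+1) = 1 := rfl; omega
      subst hv0
      have h1 : s a (F 0 + 0) = 1 := by
        have : F 0 + 0 = F 1 := rfl
        rw [this, s_F ha (by omega)]
      rw [h1, s_zero ha]
      omega
    | 1 =>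
      intro v hv
      have hv1 : v ≤ 1 := by have : F (1+1) = 2 := rfl; omega
      have hF1 : F 1 = 1 := rfl
      interval_cases v
      · rw [show F 1 + 0 = F 1 from rfl, s_F ha (by omega), s_zero ha]; omega
      · rw [show F 1 + 1 = F 2 from rfl, s_F ha (by omega), show (1:ℕ) = F 1 from rfl,
          s_F ha (by omega)]
        omega
    | (δ+2) =>
      intro v hv
      have hF2 := F_add_two δ
      have hF3 := F_add_two (δ+1)
      have hF4 := F_add_two (δ+2)
      have e3 : F (δ+1+1) = F (δ+2) := rfl
      have e4 : F (δ+1+2) = F (δ+3) := rfl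
      have e5 : F (δ+2+2) = F (δ+4) := rfl
      have e6 : F (δ+3+1) = F (δ+4) := rfl
      have e7 : F (δ+2+1) = F (δ+3) := rfl
      rcases Nat.lt_or_ge v (F (δ+1)) with h1 | h1
      · have := s_single ha (j := δ+2) (by omega) (w := v) (by omega)
        omega
      · rcases Nat.lt_or_ge v (F (δ+2)) with h2 | h2
        · -- v = F (δ+1) + v'
          set v' := v - F (δ+1) with hv'
          have e1 : v = F (δ+1) + v' := by omega
          have hs1 : s a v = 1 + s a v' := by
            rw [e1]; exact s_single ha (by omega) (by omega)
          have e2 : F (δ+2) + v = F (δ+3) + v' := by omega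
          have hs2 : s a (F (δ+2) + v) = 1 + s a v' := by
            rw [e2]; exact s_single ha (by omega) (by omega)
          omega
        · -- v = F (δ+2) + v₂
          set v₂ := v - F (δ+2) with hv₂
          have e1 : v = F (δ+2) + v₂ := by omega
          have hs1 : s a v = 1 + s a v₂ := by
            rw [e1]; exact s_single ha (by omega) (by omega)
          have hIH := IH δ (by omega) v₂ (by omega)
          have hu : F δ + v₂ < F (δ+2) := by omega
          have e2 : F (δ+2) + v = F (δ+3) + (F δ + v₂) := by omega
          have hs2 : s a (F (δ+2) + v) = 1 + s a (F δ + v₂) := by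
            rw [e2]; exact s_single ha (by omega) (by omega)
          omega

lemma ML : ∀ α c, c < F (α + 1) → ∃ r : ℕ → ℕ,
    Set.MapsTo r (Set.Ico 0 (F α)) (Set.Ico 0 (F α)) ∧ Set.InjOn r (Set.Ico 0 (F α)) ∧
    ∀ y, y < F α → s a (r y) ≤ s a (c + y) ∧ s a (c + y) ≤ s a (r y) + 1 := by
  intro α
  induction α using Nat.strong_induction_on with
  | _ α IH =>
    match α with
    | 0 =>
      intro c hc
      have hc0 : c = 0 := by have : F (0+1) = 1 := rfl; omega
      subst hc0
      exact ⟨id, Set.mapsTo_id _, Set.injOn_id _, fun y _ => by simp⟩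
    | 1 =>
      intro c hc
      have hc1 : c ≤ 1 := by have : F (1+1) = 2 := rfl; omega
      have hF1 : F 1 = 1 := rfl
      refine ⟨id, Set.mapsTo_id _, Set.injOn_id _, fun y hy => ?_⟩
      have hy0 : y = 0 := by omega
      subst hy0
      simp only [id]
      have hz := s_zero ha
      have h1 : s a 1 = 1 := s_F ha le_rfl
      interval_cases c
      · simp only [Nat.add_zero, Nat.zero_add]; omega
      · simp only [Nat.add_zero, Nat.zero_add]; omega
    | (β+2) =>
      intro c hc
      have hF2 := F_add_two β
      have hF3 := F_add_two (β+1)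
      have hF4 := F_add_two (β+2)
      have hApos := F_pos (β+1)
      have hBpos := F_pos β
      have e3 : F (β+1+1) = F (β+2) := rfl
      have e4 : F (β+1+2) = F (β+3) := rfl
      have e5 : F (β+2+2) = F (β+4) := rfl
      have e6 : F (β+3+1) = F (β+4) := rfl
      have e7 : F (β+2+1) = F (β+3) := rfl
      have hF5 := F_add_two (β+3)
      have hAB : F β ≤ F (β+1) := F_mono (by omega)
      rcases le_or_gt c (F (β+1)) with hc1 | hc1
      · -- Case 1 : c ≤ F (β+1)
        refine ⟨fun y => if c + y < F (β+2) then c + y else c + y - F (β+2), ?_, ?_, ?_⟩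
        · intro y hy
          simp only [Set.mem_Ico] at hy ⊢
          split <;> omega
        · intro y₁ h₁ y₂ h₂ heq
          simp only [Set.mem_Ico] at h₁ h₂
          simp only at heq
          split_ifs at heq <;> omega
        · intro y hy
          by_cases hb : c + y < F (β+2)
          · simp only [if_pos hb]
            omega
          · simp only [if_neg hb]
            obtain ⟨w, hw1, hw2⟩ : ∃ w, c + y = F (β+2) + w ∧ F (β+2) + w < F (β+2+1) :=
              ⟨c + y - F (β+2), by omega, by omega⟩
            have hs1 : s a (c + y) = 1 + s a w := by
              rw [hw1]; exact s_single ha (by omega) hw2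
            have hse : s a w = s a (c + y - F (β+2)) := by
              rw [show c + y - F (β+2) = w by omega]
            omega
      · rcases Nat.lt_or_ge c (F (β+2)) with hc2 | hc2
        · -- Case 2 : F (β+1) < c < F (β+2)
          refine ⟨fun y => if y < F (β+2) - c then F (β+1) + (c - F (β+1) + y)
            else if y < F (β+2) + F (β+1) - c then c - F (β+1) + y - F β
            else F (β+1) + (y - (F (β+2) + F (β+1) - c)), ?_, ?_, ?_⟩
          · intro y hy
            simp only [Set.mem_Ico] at hy ⊢
            split_ifs <;> omega
          · intro y₁ h₁ y₂ h₂ heq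
            simp only [Set.mem_Ico] at h₁ h₂
            simp only at heq
            split_ifs at heq <;> omega
          · intro y hy
            by_cases hbA : y < F (β+2) - c
            · simp only [if_pos hbA]
              have hs1 : s a (c + y) = 1 + s a (c - F (β+1) + y) := by
                rw [show c + y = F (β+1) + (c - F (β+1) + y) by omega]
                exact s_single ha (by omega) (by omega)
              have hs2 : s a (F (β+1) + (c - F (β+1) + y)) = 1 + s a (c - F (β+1) + y) :=
                s_single ha (by omega) (by omega)
              omega
            · simp only [if_neg hbA]
              by_cases hbB : y < F (β+2) + F (β+1) - c
              · simp only [if_pos hbB]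
                have hs1 : s a (c + y) = 1 + s a (c - F (β+1) + y - F β) := by
                  rw [show c + y = F (β+2) + (c - F (β+1) + y - F β) by omega]
                  exact s_single ha (by omega) (by omega)
                omega
              · simp only [if_neg hbB]
                have hs1 : s a (c + y) = 1 + s a (y - (F (β+2) + F (β+1) - c)) := by
                  rw [show c + y = F (β+3) + (y - (F (β+2) + F (β+1) - c)) by omega]
                  exact s_single ha (by omega) (by omega)
                have hs2 : s a (F (β+1) + (y - (F (β+2) + F (β+1) - c)))
                    = 1 + s a (y - (F (β+2) + F (β+1) - c)) :=
                  s_single ha (by omega) (by omega)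
                omega
        · -- Case 3 : F (β+2) ≤ c < F (β+3)
          obtain ⟨r', hm', hi', hs'⟩ := IH β (by omega) (c - F (β+2)) (by omega)
          have hrb : ∀ u, u < F β → r' u < F β := by
            intro u hu
            have := hm' (show u ∈ Set.Ico 0 (F β) by simp [Set.mem_Ico]; omega)
            simpa [Set.mem_Ico] using this
          set c₁ := c - F (β+2) with hc₁
          refine ⟨fun y => if y < F (β+1) - c₁ then c₁ + y
            else if y - (F (β+1) - c₁) < c₁ then y - (F (β+1) - c₁)
            else F (β+1) + r' (y - (F (β+1) - c₁) - c₁), ?_, ?_, ?_⟩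
          · intro y hy
            simp only [Set.mem_Ico] at hy ⊢
            split_ifs with h1 h2
            · omega
            · omega
            · have := hrb (y - (F (β+1) - c₁) - c₁) (by omega)
              omega
          · intro y₁ h₁ y₂ h₂ heq
            simp only [Set.mem_Ico] at h₁ h₂
            simp only at heq
            split_ifs at heq with b1 b2 b3 b4 b5 b6 b7
            · omega
            · omega
            · have := hrb (y₂ - (F (β+1) - c₁) - c₁) (by omega); omega
            · omega
            · omega
            · have := hrb (y₂ - (F (β+1) - c₁) - c₁) (by omega); omega
            · have := hrb (y₁ - (F (β+1) - c₁) - c₁) (by omega); omega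
            · have := hrb (y₁ - (F (β+1) - c₁) - c₁) (by omega); omega
            · have e := hi' (show y₁ - (F (β+1) - c₁) - c₁ ∈ Set.Ico 0 (F β) by
                  simp [Set.mem_Ico]; omega)
                (show y₂ - (F (β+1) - c₁) - c₁ ∈ Set.Ico 0 (F β) by
                  simp [Set.mem_Ico]; omega) (by omega)
              omega
          · intro y hy
            by_cases hbA : y < F (β+1) - c₁
            · simp only [if_pos hbA]
              have hs1 : s a (c + y) = 1 + s a (c₁ + y) := by
                rw [show c + y = F (β+2) + (c₁ + y) by omega]
                exact s_single ha (by omega) (by omega)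
              omega
            · simp only [if_neg hbA]
              have hw : c + y = F (β+3) + (y - (F (β+1) - c₁)) := by omega
              have hs1 : s a (c + y) = 1 + s a (y - (F (β+1) - c₁)) := by
                rw [hw]
                exact s_single ha (by omega) (by omega)
              by_cases hbB : y - (F (β+1) - c₁) < c₁
              · simp only [if_pos hbB]
                omega
              · simp only [if_neg hbB]
                have hu : y - (F (β+1) - c₁) - c₁ < F β := by omega
                have hsr := hs' (y - (F (β+1) - c₁) - c₁) hu
                have hrr := hrb _ hu
                have hs2 : s a (F (β+1) + r' (y - (F (β+1) - c₁) - c₁))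
                    = 1 + s a (r' (y - (F (β+1) - c₁) - c₁)) :=
                  s_single ha (by omega) (by omega)
                have he : c₁ + (y - (F (β+1) - c₁) - c₁) = y - (F (β+1) - c₁) := by omega
                rw [he] at hsr
                omega

end Main

section Main2

variable {a : ℕ → ℕ → ℕ} (ha : IsZeckendorf a)

include ha

lemma GML : ∀ γ α c, α ≤ γ → c < F (γ + 1) → ∃ r : ℕ → ℕ,
    Set.MapsTo r (Set.Ico 0 (F α)) (Set.Ico 0 (F α)) ∧ Set.InjOn r (Set.Ico 0 (F α)) ∧
    ∀ y, y < F α → s a (r y) ≤ s a (c + y) ∧ s a (c + y) ≤ s a (r y) + (γ - α + 1) := by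
  intro γ
  induction γ using Nat.strong_induction_on with
  | _ γ IH =>
    intro α c hαγ hc
    by_cases h1 : c < F (α + 1)
    · obtain ⟨r, hm, hi, hs⟩ := ML ha α c h1
      exact ⟨r, hm, hi, fun y hy => by have := hs y hy; omega⟩
    · push_neg at h1
      have hαγ' : α < γ := by
        by_contra h
        push_neg at h
        have : γ ≤ α := h
        have := F_mono (by omega : γ + 1 ≤ α + 1)
        omega
      obtain ⟨δ, rfl⟩ : ∃ δ, γ = δ + 1 := ⟨γ - 1, by omega⟩
      by_cases h2 : c < F (δ + 1)
      · obtain ⟨r, hm, hi, hs⟩ := IH δ (by omega) α c (by omega) h2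
        exact ⟨r, hm, hi, fun y hy => by have := hs y hy; omega⟩
      · push_neg at h2
        have hF2 := F_add_two δ
        have e1 : F (δ+1+1) = F (δ+2) := rfl
        have hδ : F δ ≤ F (δ+1) := F_mono (by omega)
        have hc₂ : c - F (δ + 1) < F (δ + 1) := by
          have : F δ ≤ F (δ + 1) := F_mono (by omega)
          omega
        obtain ⟨r, hm, hi, hs⟩ := IH δ (by omega) α (c - F (δ + 1)) (by omega) hc₂
        refine ⟨r, hm, hi, fun y hy => ?_⟩
        have hFα : F α ≤ F δ := F_mono (by omega)
        have hv : c - F (δ + 1) + y < F (δ + 1 + 1) := by omega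
        have hsp := splus ha (δ + 1) (c - F (δ + 1) + y) hv
        have he : c + y = F (δ + 1) + (c - F (δ + 1) + y) := by omega
        rw [he]
        have := hs y hy
        omega
      
end Main2

/-- the bijection `t : [m, m + F α) → [0, F α)` with
`0 ≤ s(x) − s₃(m) − s(t(x)) < q`. -/
theorem exists_shift_bijection
    (a : ℕ → ℕ → ℕ) (ha : IsZeckendorf a)
    (n α q : ℕ) (hn : 0 < n) (hα : 0 < α) (hq : 0 < q) (hαq : α + q ≤ n)
    (m : ℕ) (hm1 : F n ≤ m) (hm2 : m < F (n + 1))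
    (k : ℕ) (hk1 : α + 2 ≤ k) (hk2 : k ≤ α + q)
    (hk3 : a m (k - 1) = 0) (hk4 : a m k = 0) :
    ∃ t : (Set.Ico m (m + F α)) ≃ (Set.Ico 0 (F α)),
      ∀ x : Set.Ico m (m + F α),
        s a ((t x : ℕ)) + ((Finset.Ioc (α + q) m).filter (fun j => a m j = 1)).card
            ≤ s a (x : ℕ) ∧
        s a (x : ℕ) <
          s a ((t x : ℕ)) + ((Finset.Ioc (α + q) m).filter (fun j => a m j = 1)).card + q := by
  classical
  have hgood := ZGood_Zset ha m
  have hval := zval_Zset ha m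
  set Sm := Zset a m with hSm
  have hknot : k ∉ Sm := by
    intro h
    have := (Finset.mem_filter.mp h).2
    omega
  have hk1not : k - 1 ∉ Sm := by
    intro h
    have := (Finset.mem_filter.mp h).2
    omega
  set H := Sm.filter (fun j => k < j) with hH
  set L := Sm.filter (fun j => ¬ k < j) with hL
  have hmsum : zval H + zval L = m := by
    rw [← hval, zval, hH, hL]
    exact Finset.sum_filter_add_sum_filter_not _ _ _
  have hHgood : ZGood H := hgood.subset (Finset.filter_subset _ _)
  have hLgood : ZGood L := hgood.subset (Finset.filter_subset _ _)
  have hLle : ∀ i ∈ L, i ≤ k - 2 := by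
    intro i hi
    have h1 := Finset.mem_filter.mp hi
    have h2 : i ≠ k := fun e => hknot (e ▸ h1.1)
    have h3 : i ≠ k - 1 := fun e => hk1not (e ▸ h1.1)
    omega
  have hLlt : zval L < F (k - 2 + 1) := zval_lt (k - 2) hLgood hLle
  have eF : F (k - 2 + 1) = F (k - 1) := by rw [show k - 2 + 1 = k - 1 from by omega]
  have hFk : F k = F (k - 1) + F (k - 2) := by
    have := F_add_two (k - 2)
    have e1 : k - 2 + 2 = k := by omega
    have e2 : k - 2 + 1 = k - 1 := by omega
    rwa [e1, e2] at this
  have hFα : F α ≤ F (k - 2) := F_mono (by omega)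
  -- the bijection on the low part
  obtain ⟨r, hm', hi', hs'⟩ := GML ha (k - 2) α (zval L) (by omega) hLlt
  -- identification of the `D` term
  have hDeq : (Finset.Ioc (α + q) m).filter (fun j => a m j = 1)
      = H.filter (fun j => α + q < j) := by
    ext j
    simp only [Finset.mem_filter, Finset.mem_Ioc, hH, hSm, Zset, Finset.mem_Icc]
    omega
  have hcardsplit : (H.filter (fun j => α + q < j)).card
      + (H.filter (fun j => ¬ α + q < j)).card = H.card :=
    Finset.card_filter_add_card_filter_not _
  have hdle : (H.filter (fun j => ¬ α + q < j)).card ≤ α + q - k := by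
    have hsub : H.filter (fun j => ¬ α + q < j) ⊆ Finset.Icc (k + 1) (α + q) := by
      intro j hj
      have h1 := Finset.mem_filter.mp hj
      have h2 := (Finset.mem_filter.mp h1.1).2
      simp only [Finset.mem_Icc]
      constructor
      · omega
      · omega
    have := Finset.card_le_card hsub
    rw [Nat.card_Icc] at this
    omega
  -- the bijection
  have hmem : ∀ x : Set.Ico m (m + F α), r ((x : ℕ) - m) ∈ Set.Ico 0 (F α) := by
    intro x
    have hx := x.2
    simp only [Set.mem_Ico] at hx
    exact hm' (by simp only [Set.mem_Ico]; omega)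
  let g : Set.Ico m (m + F α) → Set.Ico 0 (F α) := fun x => ⟨r ((x : ℕ) - m), hmem x⟩
  have hginj : Function.Injective g := by
    intro x₁ x₂ he
    have hx₁ := x₁.2
    have hx₂ := x₂.2
    simp only [Set.mem_Ico] at hx₁ hx₂
    have h1 : r ((x₁ : ℕ) - m) = r ((x₂ : ℕ) - m) := congrArg Subtype.val he
    have h2 := hi' (show ((x₁:ℕ) - m) ∈ Set.Ico 0 (F α) by simp only [Set.mem_Ico]; omega)
      (show ((x₂:ℕ) - m) ∈ Set.Ico 0 (F α) by simp only [Set.mem_Ico]; omega) h1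
    exact Subtype.ext (by omega)
  have hgbij : Function.Bijective g := by
    rw [Fintype.bijective_iff_injective_and_card]
    refine ⟨hginj, ?_⟩
    rw [Fintype.card_Ico, Fintype.card_Ico, Nat.card_Ico, Nat.card_Ico]
    omega
  refine ⟨Equiv.ofBijective g hgbij, ?_⟩
  intro x
  have hx := x.2
  simp only [Set.mem_Ico] at hx
  obtain ⟨y, hy1, hy2⟩ : ∃ y, (x : ℕ) = m + y ∧ y < F α := ⟨(x : ℕ) - m, by omega, by omega⟩
  have hz : zval L + y < F k := by omega
  have hsx : s a (x : ℕ) = H.card + s a (zval L + y) := by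
    have hxe : (x : ℕ) = zval H + (zval L + y) := by omega
    rw [hxe]
    exact s_add ha hHgood (t := k)
      (fun i hi => by have := (Finset.mem_filter.mp hi).2; omega) hz
  have hwin := hs' y hy2
  have hcoe : ((Equiv.ofBijective g hgbij) x : ℕ) = r ((x : ℕ) - m) := rfl
  have hyx : (x : ℕ) - m = y := by omega
  rw [hcoe, hyx, hDeq]
  omega
end

section
/- Let g : ℝ → ℝ be continuous, and let g_n : ℝ → ℝ be a sequence of nondecreasing functions converging pointwise to g. Let (ε_n) be a sequence of nonnegative reals with ε_n → 0, and let f_n : ℝ → ℝ be functions satisfying g_n(x − ε_n) ≤ f_n(x) ≤ g_n(x + ε_n) for all x ∈ ℝ and all n. Then f_n converges pointwise to g: for every x ∈ ℝ, f_n(x) → g(x) as n → ∞. -/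
open Filter

/-- pointwise convergence of sandwiched functions to a continuous
pointwise limit of nondecreasing functions. -/
theorem sandwiched_pointwise_convergence
    (g : ℝ → ℝ) (hg : Continuous g)
    (gn : ℕ → ℝ → ℝ) (hgn_mono : ∀ n, Monotone (gn n))
    (hgn_conv : ∀ x : ℝ, Tendsto (fun n => gn n x) atTop (nhds (g x)))
    (ε : ℕ → ℝ) (hε_nonneg : ∀ n, 0 ≤ ε n) (hε : Tendsto ε atTop (nhds 0))
    (f : ℕ → ℝ → ℝ)
    (hf : ∀ n, ∀ x : ℝ, gn n (x - ε n) ≤ f n x ∧ f n x ≤ gn n (x + ε n))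
    (x : ℝ) :
    Tendsto (fun n => f n x) atTop (nhds (g x)) := by
  rw [Metric.tendsto_atTop]
  intro η hη
  have hc : Tendsto g (nhds x) (nhds (g x)) := hg.continuousAt
  obtain ⟨δ, hδ, hδ'⟩ := Metric.tendsto_nhds_nhds.mp hc (η/2) (by positivity)
  have h1 := Metric.tendsto_atTop.mp (hgn_conv (x + δ/2)) (η/2) (by positivity)
  have h2 := Metric.tendsto_atTop.mp (hgn_conv (x - δ/2)) (η/2) (by positivity)
  obtain ⟨N1, hN1⟩ := h1
  obtain ⟨N2, hN2⟩ := h2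
  have hεs : ∀ᶠ n in atTop, ε n < δ/2 := by
    have := hε.eventually (gt_mem_nhds (show (0:ℝ) < δ/2 by positivity))
    exact this
  obtain ⟨N3, hN3⟩ := eventually_atTop.mp hεs
  refine ⟨max N1 (max N2 N3), fun n hn => ?_⟩
  have hn1 : N1 ≤ n := le_trans (le_max_left _ _) hn
  have hn2 : N2 ≤ n := le_trans (le_trans (le_max_left _ _) (le_max_right _ _)) hn
  have hn3 : N3 ≤ n := le_trans (le_trans (le_max_right _ _) (le_max_right _ _)) hn
  have hεn := hN3 n hn3
  have hup : f n x ≤ gn n (x + δ/2) :=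
    le_trans (hf n x).2 (hgn_mono n (by linarith))
  have hlo : gn n (x - δ/2) ≤ f n x :=
    le_trans (hgn_mono n (by linarith [hε_nonneg n])) (hf n x).1
  have d1 := hN1 n hn1
  have d2 := hN2 n hn2
  have e1 : dist (g (x + δ/2)) (g x) < η/2 := hδ' (by
    rw [Real.dist_eq]; simp; rw [abs_of_pos (by positivity)]; linarith)
  have e2 : dist (g (x - δ/2)) (g x) < η/2 := hδ' (by
    rw [Real.dist_eq]; simp; rw [abs_of_pos (by positivity)]; linarith)
  rw [Real.dist_eq, abs_lt]
  rw [Real.dist_eq, abs_lt] at d1 d2 e1 e2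
  constructor <;> linarith
end

section
/- Let n ≥ 3 and let a be an integer with 1 ≤ a ≤ n − 1. Then every integer m with F_{2n} + F_{n+1} ≤ m < F_{2n} + F_{n+1} + F_a satisfies s(m) = 2 + s(m − F_{2n} − F_{n+1}), and hence s(m) ≤ 2 + ⌈(a − 1)/2⌉. In particular, every nonnegative integer r < F_a satisfies s(r) ≤ ⌈(a − 1)/2⌉. -/
open Filter MeasureTheory

lemma F_rec (k : ℕ) : F (k + 2) = F (k + 1) + F k := by
  show Nat.fib (k + 1 + 2) = Nat.fib (k + 2) + Nat.fib (k + 1)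
  rw [Nat.fib_add_two, Nat.add_comm]

lemma zeck_sum_lt (b : ℕ → ℕ) (hb1 : ∀ j, b j ≤ 1)
    (hb2 : ∀ j, ¬(b j = 1 ∧ b (j + 1) = 1)) :
    ∀ k, ∑ j ∈ Finset.Icc 1 k, b j * F j < F (k + 1) := by
  intro k
  induction k using Nat.strong_induction_on with
  | _ k ih =>
    match k with
    | 0 => simp; decide
    | 1 =>
      have h := hb1 1
      have e1 : F 1 = 1 := by decide
      have e2 : F (1 + 1) = 2 := by decide
      simp only [Finset.Icc_self, Finset.sum_singleton, e1, e2, Nat.mul_one]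
      omega
    | (k+2) =>
      rw [Finset.sum_Icc_succ_top (by omega)]
      simp only [show k+1+1 = k+2 from rfl, show k+2+1 = k+3 from rfl]
      have hle := hb1 (k+2)
      rcases Nat.le_one_iff_eq_zero_or_eq_one.mp hle with h | h
      · have h1 := ih (k+1) (by omega)
        simp only [show k+1+1 = k+2 from rfl] at h1
        have h2 : F (k + 2) ≤ F (k + 3) := F_mono (by omega)
        rw [h]; omega
      · have hprev : b (k+1) = 0 := by
          have h2 := hb2 (k+1); have h3 := hb1 (k+1)
          simp only [show k+1+1 = k+2 from rfl] at h2
          omega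
        rw [Finset.sum_Icc_succ_top (by omega), hprev]
        have h1 := ih k (by omega)
        have h3 : F (k + 3) = F (k + 2) + F (k + 1) := F_rec (k+1)
        rw [h]; omega

lemma zeck_unique (b c : ℕ → ℕ) (hb1 : ∀ j, b j ≤ 1)
    (hb2 : ∀ j, ¬(b j = 1 ∧ b (j + 1) = 1))
    (hc1 : ∀ j, c j ≤ 1) (hc2 : ∀ j, ¬(c j = 1 ∧ c (j + 1) = 1)) :
    ∀ N, (∑ j ∈ Finset.Icc 1 N, b j * F j) = (∑ j ∈ Finset.Icc 1 N, c j * F j) →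
      ∀ j, 1 ≤ j → j ≤ N → b j = c j := by
  intro N
  induction N with
  | zero => intro _ j h1 h2; omega
  | succ N ih =>
    intro hsum j hj1 hj2
    rw [Finset.sum_Icc_succ_top (by omega), Finset.sum_Icc_succ_top (by omega)] at hsum
    have hbN := hb1 (N+1)
    have hcN := hc1 (N+1)
    have hltb := zeck_sum_lt b hb1 hb2 N
    have hltc := zeck_sum_lt c hc1 hc2 N
    have heq : b (N+1) = c (N+1) := by
      rcases Nat.le_one_iff_eq_zero_or_eq_one.mp hbN with h | h <;>
        rcases Nat.le_one_iff_eq_zero_or_eq_one.mp hcN with h' | h' <;>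
        rw [h, h'] at hsum ⊢ <;> omega
    rcases Nat.lt_or_ge j (N+1) with hj | hj
    · rw [heq] at hsum
      exact ih (by omega) j hj1 (by omega)
    · have : j = N + 1 := by omega
      rw [this]; exact heq

lemma count_le (b : ℕ → ℕ) (hb1 : ∀ j, b j ≤ 1)
    (hb2 : ∀ j, ¬(b j = 1 ∧ b (j + 1) = 1)) :
    ∀ k, ∑ j ∈ Finset.Icc 1 k, b j ≤ (k + 1) / 2 := by
  intro k
  induction k using Nat.strong_induction_on with
  | _ k ih =>
    match k with
    | 0 => simp
    | 1 => simpa using hb1 1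
    | (k+2) =>
      rw [Finset.sum_Icc_succ_top (by omega), Finset.sum_Icc_succ_top (by omega)]
      simp only [show k+1+1 = k+2 from rfl, show k+2+1 = k+3 from rfl]
      have h1 := ih k (by omega)
      have h2 := hb2 (k+1)
      simp only [show k+1+1 = k+2 from rfl] at h2
      have h3 := hb1 (k+1)
      have h4 := hb1 (k+2)
      omega

lemma digit_support (a : ℕ → ℕ → ℕ) (ha : IsZeckendorf a) (A r : ℕ)
    (hr : r < F A) : ∀ j, A ≤ j → a r j = 0 := by
  obtain ⟨h0, h1, h2, h3, h4⟩ := ha r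
  intro j hj
  by_contra hne
  have hone : a r j = 1 := by have := h1 j; omega
  have hjr : j ≤ r := by
    by_contra hc
    push_neg at hc
    rw [h3 j hc] at hone
    omega
  have hj1 : 1 ≤ j := by
    rcases Nat.eq_zero_or_pos j with h | h
    · rw [h] at hone; rw [h0] at hone; omega
    · exact h
  have hmem : j ∈ Finset.Icc 1 r := by simp [Finset.mem_Icc]; omega
  have hle : a r j * F j ≤ ∑ i ∈ Finset.Icc 1 r, a r i * F i :=
    Finset.single_le_sum (f := fun i => a r i * F i) (fun i _ => Nat.zero_le _) hmem
  rw [hone, one_mul, ← h4] at hle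
  have : F A ≤ F j := F_mono hj
  omega

lemma s_le_of_lt (a : ℕ → ℕ → ℕ) (ha : IsZeckendorf a) (A : ℕ) (hA1 : 1 ≤ A)
    (r : ℕ) (hr : r < F A) : s a r ≤ ((A - 1) + 1) / 2 := by
  obtain ⟨h0, h1, h2, h3, h4⟩ := ha r
  have hsupp := digit_support a ha A r hr
  unfold s
  set t := min r (A - 1) with htdef
  have hc := min_le_left r (A - 1)
  have hc' := min_le_right r (A - 1)
  have hcases := min_choice r (A - 1)
  have heq : ∑ j ∈ Finset.Icc 1 r, a r j = ∑ j ∈ Finset.Icc 1 t, a r j := by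
    refine (Finset.sum_subset (Finset.Icc_subset_Icc_right hc) ?_).symm
    intro x hx hnx
    simp only [Finset.mem_Icc] at hx hnx
    exact hsupp x (by omega)
  rw [heq]
  calc ∑ j ∈ Finset.Icc 1 t, a r j ≤ (t + 1) / 2 := count_le (a r) h1 h2 t
    _ ≤ ((A - 1) + 1) / 2 := Nat.div_le_div_right (by omega)

/-- integers in `[F (2n) + F (n+1), F (2n) + F (n+1) + F a)` have
`s(m) = 2 + s(m - F (2n) - F (n+1)) ≤ 2 + ⌈(a-1)/2⌉`; in particular every `r < F a`
has `s(r) ≤ ⌈(a-1)/2⌉`. -/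
theorem few_summands_above_F2n
    (a : ℕ → ℕ → ℕ) (ha : IsZeckendorf a)
    (n : ℕ) (hn : 3 ≤ n) (A : ℕ) (hA1 : 1 ≤ A) (hA2 : A ≤ n - 1) :
    (∀ m : ℕ, F (2 * n) + F (n + 1) ≤ m → m < F (2 * n) + F (n + 1) + F A →
      s a m = 2 + s a (m - F (2 * n) - F (n + 1)) ∧
      s a m ≤ 2 + ((A - 1) + 1) / 2) ∧
    (∀ r : ℕ, r < F A → s a r ≤ ((A - 1) + 1) / 2) := by
  have hpart2 : ∀ r : ℕ, r < F A → s a r ≤ ((A - 1) + 1) / 2 :=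
    fun r hr => s_le_of_lt a ha A hA1 r hr
  refine ⟨?_, hpart2⟩
  intro m hm1 hm2
  set r := m - F (2 * n) - F (n + 1) with hrdef
  have hr : r < F A := by omega
  have hrm : m = F (2 * n) + F (n + 1) + r := by omega
  obtain ⟨hr0, hr1, hr2, hr3, hr4⟩ := ha r
  obtain ⟨hm0, hm1', hm2', hm3', hm4'⟩ := ha m
  have hsupp : ∀ j, A ≤ j → a r j = 0 := digit_support a ha A r hr
  have hF2n : 2 * n + 1 ≤ F (2 * n) := by
    have := Nat.le_fib_self (n := 2 * n + 1) (by omega)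
    simpa [F] using this
  have hm2n : 2 * n ≤ m := by omega
  have hrm' : r ≤ m := by omega
  set b : ℕ → ℕ :=
    fun j => a r j + (if j = n + 1 then 1 else 0) + (if j = 2 * n then 1 else 0) with hbdef
  have hb1 : ∀ j, b j ≤ 1 := by
    intro j
    by_cases e1 : j = n + 1
    · have h := hsupp (n + 1) (by omega)
      simp [hbdef, e1, show ¬(n + 1 = 2 * n) by omega, h]
    · by_cases e2 : j = 2 * n
      · have h := hsupp (2 * n) (by omega)
        simp [hbdef, e2, show ¬(2 * n = n + 1) by omega, h]
      · have := hr1 j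
        simp only [hbdef, e1, e2, if_neg, ite_false]
        omega
  have hb2 : ∀ j, ¬(b j = 1 ∧ b (j + 1) = 1) := by
    rintro j ⟨hj, hj'⟩
    by_cases e1 : j = n + 1
    · have h := hsupp (n + 2) (by omega)
      rw [e1] at hj'
      simp [hbdef, show ¬(n + 1 + 1 = n + 1) by omega,
        show ¬(n + 1 + 1 = 2 * n) by omega, h] at hj'
    · by_cases e2 : j = 2 * n
      · have h := hsupp (2 * n + 1) (by omega)
        rw [e2] at hj'
        simp [hbdef, show ¬(2 * n + 1 = n + 1) by omega,
          show ¬(2 * n + 1 = 2 * n) by omega, h] at hj'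
        omega
      · by_cases e3 : j + 1 = n + 1
        · have h := hsupp n (by omega)
          have ej : j = n := by omega
          rw [ej] at hj
          simp [hbdef, show ¬(n = n + 1) by omega, show ¬(n = 2 * n) by omega, h] at hj
        · by_cases e4 : j + 1 = 2 * n
          · have h := hsupp j (by omega)
            simp [hbdef, e1, e2, h] at hj
          · simp only [hbdef, e1, e2, e3, e4, ite_false, if_neg, Nat.add_zero] at hj hj'
            exact hr2 j ⟨hj, hj'⟩
  have hmem1 : n + 1 ∈ Finset.Icc 1 m := by simp [Finset.mem_Icc]; omega
  have hmem2 : 2 * n ∈ Finset.Icc 1 m := by simp [Finset.mem_Icc]; omega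
  have hrsumF : ∑ j ∈ Finset.Icc 1 m, a r j * F j = r := by
    rw [← Finset.sum_subset (Finset.Icc_subset_Icc_right hrm')
      (fun x hx hnx => by
        simp only [Finset.mem_Icc] at hx hnx
        rw [hr3 x (by omega), Nat.zero_mul])]
    exact hr4.symm
  have hsum_b : ∑ j ∈ Finset.Icc 1 m, b j * F j = m := by
    have expand : ∀ j, b j * F j =
        a r j * F j + ((if j = n + 1 then F j else 0) + (if j = 2 * n then F j else 0)) := by
      intro j
      simp only [hbdef]
      by_cases e1 : j = n + 1
      · subst e1
        simp [show ¬(n + 1 = 2 * n) by omega]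
        ring
      · by_cases e2 : j = 2 * n
        · subst e2
          simp [e1]
          ring
        · simp [e1, e2]
    rw [Finset.sum_congr rfl (fun j _ => expand j), Finset.sum_add_distrib,
      Finset.sum_add_distrib,
      Finset.sum_ite_eq' (Finset.Icc 1 m) (n + 1) F,
      Finset.sum_ite_eq' (Finset.Icc 1 m) (2 * n) F, if_pos hmem1, if_pos hmem2, hrsumF]
    omega
  have hdig : ∀ j, 1 ≤ j → j ≤ m → a m j = b j :=
    zeck_unique (a m) b hm1' hm2' hb1 hb2 m (by rw [← hm4', hsum_b])
  have hrsum1 : ∑ j ∈ Finset.Icc 1 m, a r j = ∑ j ∈ Finset.Icc 1 r, a r j := by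
    exact (Finset.sum_subset (Finset.Icc_subset_Icc_right hrm')
      (fun x hx hnx => by
        simp only [Finset.mem_Icc] at hx hnx
        exact hr3 x (by omega))).symm
  have hs : s a m = s a r + 2 := by
    unfold s
    rw [Finset.sum_congr rfl (fun j hj => by
      simp only [Finset.mem_Icc] at hj
      exact hdig j hj.1 hj.2)]
    have expand2 : ∀ j, b j =
        a r j + ((if j = n + 1 then 1 else 0) + (if j = 2 * n then 1 else 0)) := by
      intro j; simp only [hbdef]; ring
    rw [Finset.sum_congr rfl (fun j _ => expand2 j), Finset.sum_add_distrib,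
      Finset.sum_add_distrib,
      Finset.sum_ite_eq' (Finset.Icc 1 m) (n + 1) (fun _ => 1),
      Finset.sum_ite_eq' (Finset.Icc 1 m) (2 * n) (fun _ => 1),
      if_pos hmem1, if_pos hmem2, hrsum1]
  have hp2 := hpart2 r hr
  exact ⟨by omega, by omega⟩
end
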